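/- Let α = √(2/π)·(1 − e^{−1/2}) + ∫_1^∞ √(2/π)·e^{−z²/2} dz and let c > 1/α. Let z₁, z₂, z₁', z₂' > 0, s, s' > 0, w > 0. Define F_{a,b}(r) = arcosh(1 + (r² + (a − b)²)/(2ab)), r = F_{z₁,z₂}(s), and assume r > 0, F_{z₁',z₂'}(s') ≥ c·r, and F_{z₁',z₂'}(s') < w. Set p₁ = 1 − (1/w)·∫_0^∞ √(2/π)e^{−z²/2}·F_{z₁,z₂}(s·z) dz and p₂ = 1 − (1/w)·∫_0^∞ √(2/π)e^{−z²/2}·F_{z₁',z₂'}(s'·z) dz. Then 0 < p₂ < p₁ < 1 and log(1/p₁)/log(1/p₂) ≤ 1/(α·c). -/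

import Mathlib

open Real MeasureTheory

/-- The inverse hyperbolic cosine. -/
noncomputable def arcosh (x : ℝ) : ℝ := Real.log (x + Real.sqrt (x ^ 2 - 1))

/-- The hyperbolic distance, in the Poincaré half-space model, between two points
with heights `a, b` whose horizontal coordinates are at Euclidean distance `r`. -/
noncomputable def F (a b r : ℝ) : ℝ :=
  _root_.arcosh (1 + (r ^ 2 + (a - b) ^ 2) / (2 * a * b))

/-- The constant `α = √(2/π)(1 - e^{-1/2}) + ∫_1^∞ √(2/π) e^{-z²/2} dz ≈ 0.63`. -/
noncomputable def alphaLSH : ℝ :=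
  Real.sqrt (2 / π) * (1 - Real.exp (-1 / 2)) +
    ∫ z in Set.Ioi (1 : ℝ), Real.sqrt (2 / π) * Real.exp (-z ^ 2 / 2)

open Set Filter Topology

section Aux

/-! ### Pointwise facts about `F` via `arsinh` -/

lemma sqrt_add_le' {x y : ℝ} (hx : 0 ≤ x) (hy : 0 ≤ y) :
    Real.sqrt (x + y) ≤ Real.sqrt x + Real.sqrt y := by
  calc Real.sqrt (x + y) ≤ Real.sqrt ((Real.sqrt x + Real.sqrt y) ^ 2) := by
        apply Real.sqrt_le_sqrt
        nlinarith [Real.sq_sqrt hx, Real.sq_sqrt hy, Real.sqrt_nonneg x, Real.sqrt_nonneg y]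
    _ = Real.sqrt x + Real.sqrt y := Real.sqrt_sq (by positivity)

lemma arcosh_one_add {u : ℝ} (hu : 0 ≤ u) :
    _root_.arcosh (1 + u) = 2 * Real.arsinh (Real.sqrt (u / 2)) := by
  have h2 : (0:ℝ) ≤ u / 2 := by linarith
  have h3 : (0:ℝ) ≤ 1 + u / 2 := by linarith
  have ha : Real.sqrt (u / 2) ^ 2 = u / 2 := Real.sq_sqrt h2
  have hb : Real.sqrt (1 + u / 2) ^ 2 = 1 + u / 2 := Real.sq_sqrt h3
  rw [Real.arsinh, _root_.arcosh, ha]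
  rw [show (2:ℝ) * Real.log (Real.sqrt (u/2) + Real.sqrt (1 + u/2))
      = Real.log ((Real.sqrt (u/2) + Real.sqrt (1 + u/2)) ^ 2) by
    rw [Real.log_pow]; push_cast; ring]
  congr 1
  have e2 : Real.sqrt (u/2) * Real.sqrt (1 + u/2) = Real.sqrt (u^2 + 2*u) / 2 := by
    rw [← Real.sqrt_mul h2, show u/2 * (1 + u/2) = (u^2 + 2*u)/4 by ring,
      Real.sqrt_div (by positivity), show Real.sqrt 4 = 2 by
        rw [show (4:ℝ) = 2^2 by norm_num, Real.sqrt_sq (by norm_num)]]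
  have e3 : (Real.sqrt (u/2) + Real.sqrt (1 + u/2)) ^ 2
      = u/2 + 2 * (Real.sqrt (u/2) * Real.sqrt (1 + u/2)) + (1 + u/2) := by
    nlinarith [ha, hb]
  rw [e3, e2, show (1 + u)^2 - 1 = u^2 + 2*u by ring]
  ring

lemma F_eq {a b : ℝ} (ha : 0 < a) (hb : 0 < b) (x : ℝ) :
    F a b x = 2 * Real.arsinh (Real.sqrt ((x^2 + (a-b)^2) / (4*(a*b)))) := by
  have hab : 0 < a * b := mul_pos ha hb
  have hu : 0 ≤ (x^2 + (a-b)^2) / (2*a*b) := by positivity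
  rw [F, arcosh_one_add hu, div_div, show 2 * a * b * 2 = 4 * (a * b) by ring]

lemma F_nonneg {a b : ℝ} (ha : 0 < a) (hb : 0 < b) (x : ℝ) : 0 ≤ F a b x := by
  rw [F_eq ha hb]
  have := Real.arsinh_nonneg_iff.2 (Real.sqrt_nonneg ((x^2 + (a-b)^2) / (4*(a*b))))
  linarith

lemma F_mono {a b : ℝ} (ha : 0 < a) (hb : 0 < b) {x y : ℝ} (hx : 0 ≤ x) (hxy : x ≤ y) :
    F a b x ≤ F a b y := by
  rw [F_eq ha hb, F_eq ha hb]
  have hab : 0 < a * b := mul_pos ha hb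
  have h1 : (x^2 + (a-b)^2)/(4*(a*b)) ≤ (y^2 + (a-b)^2)/(4*(a*b)) :=
    (div_le_div_iff_of_pos_right (by positivity)).2 (by nlinarith)
  have h2 := Real.arsinh_le_arsinh.2 (Real.sqrt_le_sqrt h1)
  linarith

lemma concaveOn_arsinh : ConcaveOn ℝ (Ici (0:ℝ)) Real.arsinh := by
  apply AntitoneOn.concaveOn_of_deriv (convex_Ici 0) Real.continuous_arsinh.continuousOn
    Real.differentiable_arsinh.differentiableOn
  have hd : deriv Real.arsinh = fun x => (Real.sqrt (1 + x^2))⁻¹ :=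
    funext fun x => (Real.hasDerivAt_arsinh x).deriv
  rw [interior_Ici, hd]
  intro x hx y hy hxy
  have h1 : (0:ℝ) < Real.sqrt (1 + x^2) := Real.sqrt_pos.2 (by positivity)
  have h2 : Real.sqrt (1 + x^2) ≤ Real.sqrt (1 + y^2) := by
    apply Real.sqrt_le_sqrt
    have : (0:ℝ) < x := hx
    nlinarith
  exact inv_anti₀ h1 h2

lemma arsinh_scale {y z : ℝ} (hy : 0 ≤ y) (h0 : 0 ≤ z) (h1 : z ≤ 1) :
    z * Real.arsinh y ≤ Real.arsinh (z * y) := by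
  have := concaveOn_arsinh.2 (mem_Ici.2 hy) (mem_Ici.2 (le_refl (0:ℝ))) h0
    (by linarith : 0 ≤ 1 - z) (by ring)
  simpa [Real.arsinh_zero] using this

lemma arsinh_le_self {y : ℝ} (hy : 0 ≤ y) : Real.arsinh y ≤ y := by
  rw [← Real.sinh_le_sinh, Real.sinh_arsinh]
  rcases eq_or_lt_of_le hy with h | h
  · simp [← h]
  · exact (Real.self_lt_sinh_iff.2 h).le

lemma F_lower {a b s : ℝ} (ha : 0 < a) (hb : 0 < b) (hs : 0 ≤ s) {z : ℝ}
    (hz0 : 0 ≤ z) (hz1 : z ≤ 1) : z * F a b s ≤ F a b (s * z) := by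
  rw [F_eq ha hb, F_eq ha hb]
  have hab : 0 < a * b := mul_pos ha hb
  set K := (a - b)^2 with hK
  set M := 4 * (a * b) with hM
  have hMpos : 0 < M := by positivity
  have hQ : 0 ≤ Real.sqrt ((s^2 + K) / M) := Real.sqrt_nonneg _
  have step1 : z * Real.sqrt ((s^2 + K) / M) ≤ Real.sqrt (((s*z)^2 + K) / M) := by
    have : z * Real.sqrt ((s^2 + K) / M) = Real.sqrt (z^2 * ((s^2 + K) / M)) := by
      rw [Real.sqrt_mul (sq_nonneg z), Real.sqrt_sq hz0]
    rw [this]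
    apply Real.sqrt_le_sqrt
    rw [show z^2 * ((s^2 + K) / M) = (z^2 * (s^2 + K)) / M by ring]
    have hK0 : 0 ≤ K := hK ▸ sq_nonneg _
    apply (div_le_div_iff_of_pos_right hMpos).2
    nlinarith [mul_nonneg (mul_nonneg (sub_nonneg.2 hz1) (by linarith : (0:ℝ) ≤ 1 + z)) hK0]
  calc z * (2 * Real.arsinh (Real.sqrt ((s^2 + K) / M)))
      = 2 * (z * Real.arsinh (Real.sqrt ((s^2 + K) / M))) := by ring
    _ ≤ 2 * Real.arsinh (z * Real.sqrt ((s^2 + K) / M)) := by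
        have := arsinh_scale hQ hz0 hz1
        linarith
    _ ≤ 2 * Real.arsinh (Real.sqrt (((s*z)^2 + K) / M)) := by
        have := Real.arsinh_le_arsinh.2 step1
        linarith

lemma tangent_le {S : Set ℝ} {f : ℝ → ℝ} {d t₀ t : ℝ}
    (hf : ConcaveOn ℝ S f) (ht₀ : t₀ ∈ S) (ht : t ∈ S) (hd : HasDerivAt f d t₀) :
    f t ≤ f t₀ + d * (t - t₀) := by
  rcases lt_trichotomy t t₀ with h | h | h
  · have hsl := hf.le_slope_of_hasDerivAt ht ht₀ h hd
    rw [slope_def_field] at hsl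
    rw [le_div_iff₀ (by linarith : (0:ℝ) < t₀ - t)] at hsl
    nlinarith
  · subst h; simp
  · have hsl := hf.slope_le_of_hasDerivAt ht₀ ht h hd
    rw [slope_def_field] at hsl
    rw [div_le_iff₀ (by linarith : (0:ℝ) < t - t₀)] at hsl
    nlinarith

lemma F_upper {a b s : ℝ} (ha : 0 < a) (hb : 0 < b) (hs : 0 < s) :
    ∃ C : ℝ, ∀ z : ℝ, 0 ≤ z → F a b (s * z) ≤ F a b s + C * (z^2 - 1) := by
  have hab : 0 < a * b := mul_pos ha hb
  set K := (a - b)^2 with hK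
  set M := 4 * (a * b) with hM
  have hK0 : 0 ≤ K := sq_nonneg _
  have hMpos : 0 < M := by positivity
  set ψ : ℝ → ℝ := fun t => 2 * Real.arsinh (Real.sqrt ((t + K) / M)) with hψ
  set d : ℝ → ℝ := fun t => (Real.sqrt ((t + K) * (t + K + M)))⁻¹ with hd
  have hFψ : ∀ x : ℝ, F a b x = ψ (x^2) := fun x => F_eq ha hb x
  have hderiv : ∀ t : ℝ, 0 < t → HasDerivAt ψ (d t) t := by
    intro t ht
    have htK : 0 < t + K := by linarith
    have hA : 0 < (t + K) / M := div_pos htK hMpos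
    have h1 : HasDerivAt (fun u : ℝ => (u + K) / M) (1 / M) t := by
      simpa using ((hasDerivAt_id t).add_const K).div_const M
    have h2 : HasDerivAt Real.sqrt (1 / (2 * Real.sqrt ((t + K) / M))) ((t + K) / M) :=
      Real.hasDerivAt_sqrt (ne_of_gt hA)
    have h3 : HasDerivAt (fun u : ℝ => Real.sqrt ((u + K) / M))
        (1 / (2 * Real.sqrt ((t + K) / M)) * (1 / M)) t := h2.comp t h1
    have h4 := ((Real.hasDerivAt_arsinh (Real.sqrt ((t + K) / M))).comp t h3).const_mul 2
    refine h4.congr_deriv (Eq.symm ?_)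
    have hsq : Real.sqrt ((t + K) / M) ^ 2 = (t + K) / M := Real.sq_sqrt hA.le
    rw [hsq]
    have hprod : Real.sqrt (1 + (t + K) / M) * Real.sqrt ((t + K) / M)
        = Real.sqrt ((t + K) * (t + K + M)) / M := by
      rw [← Real.sqrt_mul (by positivity)]
      rw [show (1 + (t + K) / M) * ((t + K) / M) = ((t + K) * (t + K + M)) / M^2 by
        field_simp; ring]
      rw [Real.sqrt_div (by positivity), Real.sqrt_sq hMpos.le]
    have hpos1 : 0 < Real.sqrt (1 + (t + K) / M) := Real.sqrt_pos.2 (by positivity)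
    have hpos2 : 0 < Real.sqrt ((t + K) / M) := Real.sqrt_pos.2 hA
    have hpos3 : 0 < Real.sqrt ((t + K) * (t + K + M)) := Real.sqrt_pos.2 (by nlinarith)
    have h5 : Real.sqrt (1 + (t + K) / M) * Real.sqrt ((t + K) / M) * M
        = Real.sqrt ((t + K) * (t + K + M)) := by
      rw [hprod]; field_simp
    show (Real.sqrt ((t + K) * (t + K + M)))⁻¹
        = 2 * ((Real.sqrt (1 + (t + K) / M))⁻¹ * (1 / (2 * Real.sqrt ((t + K) / M)) * (1 / M)))
    rw [← h5]
    field_simp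
  have hcontψ : Continuous ψ := by
    apply Continuous.mul continuous_const
    exact Real.continuous_arsinh.comp (Real.continuous_sqrt.comp (by fun_prop))
  have hconc : ConcaveOn ℝ (Ici (0:ℝ)) ψ := by
    apply AntitoneOn.concaveOn_of_deriv (convex_Ici 0) hcontψ.continuousOn
    · rw [interior_Ici]
      exact fun t ht => (hderiv t ht).differentiableAt.differentiableWithinAt
    · rw [interior_Ici]
      intro x hx y hy hxy
      rw [(hderiv x hx).deriv, (hderiv y hy).deriv, hd]
      have hx' : (0:ℝ) < x := hx
      have hy' : (0:ℝ) < y := hy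
      have h1 : 0 < Real.sqrt ((x + K) * (x + K + M)) := Real.sqrt_pos.2 (by nlinarith)
      apply inv_anti₀ h1
      apply Real.sqrt_le_sqrt
      nlinarith
  refine ⟨s^2 * d (s^2), fun z hz => ?_⟩
  have ht₀ : (s^2 : ℝ) ∈ Ici (0:ℝ) := mem_Ici.2 (by positivity)
  have ht : ((s*z)^2 : ℝ) ∈ Ici (0:ℝ) := mem_Ici.2 (by positivity)
  have := tangent_le hconc ht₀ ht (hderiv (s^2) (by positivity))
  rw [hFψ (s*z), hFψ s]
  calc ψ ((s*z)^2) ≤ ψ (s^2) + d (s^2) * ((s*z)^2 - s^2) := this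
    _ = ψ (s^2) + s^2 * d (s^2) * (z^2 - 1) := by ring

lemma F_le_linear {a b s : ℝ} (ha : 0 < a) (hb : 0 < b) {z : ℝ} (hz : 0 ≤ z) :
    F a b (s * z) ≤ 2 * Real.sqrt ((a-b)^2 / (4*(a*b)))
      + 2 * Real.sqrt (s^2 / (4*(a*b))) * z := by
  have hab : 0 < a * b := mul_pos ha hb
  rw [F_eq ha hb]
  have h1 : Real.arsinh (Real.sqrt (((s*z)^2 + (a-b)^2) / (4*(a*b))))
      ≤ Real.sqrt (((s*z)^2 + (a-b)^2) / (4*(a*b))) := arsinh_le_self (Real.sqrt_nonneg _)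
  have h2 : Real.sqrt (((s*z)^2 + (a-b)^2) / (4*(a*b)))
      ≤ Real.sqrt (s^2 / (4*(a*b))) * z + Real.sqrt ((a-b)^2 / (4*(a*b))) := by
    have e : ((s*z)^2 + (a-b)^2) / (4*(a*b))
        = s^2 / (4*(a*b)) * z^2 + (a-b)^2 / (4*(a*b)) := by field_simp
    rw [e]
    calc Real.sqrt (s^2 / (4*(a*b)) * z^2 + (a-b)^2 / (4*(a*b)))
        ≤ Real.sqrt (s^2 / (4*(a*b)) * z^2) + Real.sqrt ((a-b)^2 / (4*(a*b))) :=
          sqrt_add_le' (by positivity) (by positivity)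
      _ = Real.sqrt (s^2 / (4*(a*b))) * z + Real.sqrt ((a-b)^2 / (4*(a*b))) := by
          rw [Real.sqrt_mul (by positivity), Real.sqrt_sq hz]
  linarith

/-! ### Integral computations -/

lemma exp_half_eq : (fun z : ℝ => Real.exp (-z^2/2)) = fun z => Real.exp (-(1/2) * z^2) := by
  funext z; congr 1; ring

lemma integrable_g : IntegrableOn (fun z : ℝ => Real.sqrt (2/π) * Real.exp (-z^2/2)) (Ioi 0) := by
  have h : Integrable (fun z : ℝ => Real.exp (-(1/2) * z^2)) :=
    integrable_exp_neg_mul_sq (by norm_num)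
  have := (h.const_mul (Real.sqrt (2/π))).integrableOn (s := Ioi 0)
  refine this.congr_fun (fun x _ => ?_) measurableSet_Ioi
  congr 1; ring

lemma integrable_zg : IntegrableOn (fun z : ℝ => z * Real.exp (-z^2/2)) (Ioi 0) := by
  have h : Integrable (fun z : ℝ => z * Real.exp (-(1/2) * z^2)) :=
    integrable_mul_exp_neg_mul_sq (by norm_num)
  refine (h.integrableOn (s := Ioi 0)).congr_fun (fun x _ => ?_) measurableSet_Ioi
  congr 2; ring

lemma integrable_z2g : IntegrableOn (fun z : ℝ => z^2 * Real.exp (-z^2/2)) (Ioi 0) := by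
  have h : IntegrableOn (fun z : ℝ => z ^ (2:ℝ) * Real.exp (-(1/2) * z^2)) (Ioi 0) :=
    integrableOn_rpow_mul_exp_neg_mul_sq (by norm_num) (by norm_num)
  refine h.congr_fun (fun x _ => ?_) measurableSet_Ioi
  simp only [Real.rpow_two]
  congr 2; ring

lemma integrable_gz2 :
    IntegrableOn (fun z : ℝ => Real.sqrt (2/π) * Real.exp (-z^2/2) * z^2) (Ioi 0) := by
  have h : IntegrableOn (fun z : ℝ => Real.sqrt (2/π) * (z^2 * Real.exp (-z^2/2))) (Ioi 0) :=
    integrable_z2g.const_mul _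
  exact h.congr_fun (fun x _ => by ring) measurableSet_Ioi

lemma sqrt_two_pi_alg : Real.sqrt (2/π) * (Real.sqrt (π / (1/2)) / 2) = 1 := by
  rw [show π / (1/2 : ℝ) = 2/π * π^2 by field_simp]
  rw [Real.sqrt_mul (by positivity), Real.sqrt_sq pi_pos.le]
  rw [show Real.sqrt (2/π) * (Real.sqrt (2/π) * π / 2)
      = (Real.sqrt (2/π))^2 * (π/2) by ring]
  rw [Real.sq_sqrt (by positivity)]
  field_simp

lemma int_g : ∫ z in Ioi (0:ℝ), Real.sqrt (2/π) * Real.exp (-z^2/2) = 1 := by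
  have : ∀ z : ℝ, Real.sqrt (2/π) * Real.exp (-z^2/2)
      = Real.sqrt (2/π) * Real.exp (-(1/2) * z^2) := fun z => by congr 1; ring
  simp_rw [this]
  rw [integral_const_mul, integral_gaussian_Ioi]
  exact sqrt_two_pi_alg

lemma int_z2g : ∫ z in Ioi (0:ℝ), Real.sqrt (2/π) * Real.exp (-z^2/2) * z^2 = 1 := by
  have key : ∫ z in Ioi (0:ℝ), (z^2 * Real.exp (-(1/2) * z^2) - Real.exp (-(1/2) * z^2)) = 0 := by
    have hint : IntegrableOn
        (fun z : ℝ => z^2 * Real.exp (-(1/2) * z^2) - Real.exp (-(1/2) * z^2)) (Ioi 0) := by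
      apply Integrable.sub
      · refine integrable_z2g.congr_fun (fun x _ => ?_) measurableSet_Ioi
        congr 2; ring
      · exact ((integrable_exp_neg_mul_sq (by norm_num : (0:ℝ) < 1/2))).integrableOn
    have hderiv : ∀ x ∈ Ioi (0:ℝ), HasDerivAt (fun z : ℝ => -(z * Real.exp (-(1/2) * z^2)))
        (x^2 * Real.exp (-(1/2) * x^2) - Real.exp (-(1/2) * x^2)) x := by
      intro x _
      have h1 : HasDerivAt (fun z : ℝ => -(1/2) * z^2) (-(1/2) * (2 * x)) x := by
        simpa using (hasDerivAt_pow 2 x).const_mul (-(1/2 : ℝ))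
      have h2 := ((hasDerivAt_id x).mul h1.exp).neg
      refine h2.congr_deriv (Eq.symm ?_)
      simp only [id_eq]
      ring
    have htend : Tendsto (fun z : ℝ => -(z * Real.exp (-(1/2) * z^2))) atTop (𝓝 0) := by
      have h := rpow_mul_exp_neg_mul_sq_isLittleO_exp_neg (by norm_num : (0:ℝ) < 1/2) 1
      simp only [Real.rpow_one] at h
      have hcomp : Tendsto (fun x : ℝ => (1/2 : ℝ) * x) atTop atTop :=
        Tendsto.const_mul_atTop (by norm_num) tendsto_id
      have hexp : Tendsto (fun x : ℝ => Real.exp (-(1/2) * x)) atTop (𝓝 0) := by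
        have h2 := tendsto_exp_neg_atTop_nhds_zero.comp hcomp
        have heq : (fun x : ℝ => Real.exp (-(1/2) * x))
            = (fun x : ℝ => Real.exp (-x)) ∘ (fun x : ℝ => (1/2 : ℝ) * x) := by
          funext x
          simp only [Function.comp_apply]
          congr 1
          ring
        rw [heq]
        exact h2
      have h0 : Tendsto (fun z : ℝ => z * Real.exp (-(1/2) * z^2)) atTop (𝓝 0) :=
        h.isBigO.trans_tendsto hexp
      simpa using h0.neg
    have := integral_Ioi_of_hasDerivAt_of_tendsto (a := 0)
      (f := fun z : ℝ => -(z * Real.exp (-(1/2) * z^2)))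
      (Continuous.continuousWithinAt (by continuity)) hderiv hint htend
    simpa using this
  have hsplit : ∫ z in Ioi (0:ℝ), z^2 * Real.exp (-(1/2) * z^2)
      = ∫ z in Ioi (0:ℝ), Real.exp (-(1/2) * z^2) := by
    have h1 : IntegrableOn (fun z : ℝ => z^2 * Real.exp (-(1/2) * z^2)) (Ioi 0) := by
      refine integrable_z2g.congr_fun (fun x _ => ?_) measurableSet_Ioi
      congr 2; ring
    have h2 : IntegrableOn (fun z : ℝ => Real.exp (-(1/2) * z^2)) (Ioi 0) :=
      ((integrable_exp_neg_mul_sq (by norm_num : (0:ℝ) < 1/2))).integrableOn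
    have := integral_sub h1 h2
    rw [key] at this
    linarith [this]
  have : ∀ z : ℝ, Real.sqrt (2/π) * Real.exp (-z^2/2) * z^2
      = Real.sqrt (2/π) * (z^2 * Real.exp (-(1/2) * z^2)) := fun z => by
    rw [show -(1/2) * z^2 = -z^2/2 by ring]; ring
  simp_rw [this]
  rw [integral_const_mul, hsplit, integral_gaussian_Ioi]
  exact sqrt_two_pi_alg

lemma int_zg_Ioc : ∫ z in Ioc (0:ℝ) 1, Real.sqrt (2/π) * Real.exp (-z^2/2) * z
    = Real.sqrt (2/π) * (1 - Real.exp (-1/2)) := by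
  rw [← intervalIntegral.integral_of_le zero_le_one]
  have hderiv : ∀ x ∈ uIcc (0:ℝ) 1,
      HasDerivAt (fun t : ℝ => -(Real.sqrt (2/π) * Real.exp (-t^2/2)))
      (Real.sqrt (2/π) * Real.exp (-x^2/2) * x) x := by
    intro x _
    have h1 : HasDerivAt (fun t : ℝ => -t^2/2) (-(2 * x)/2) x := by
      simpa using ((hasDerivAt_pow 2 x).neg.div_const 2)
    have h2 := (h1.exp.const_mul (Real.sqrt (2/π))).neg
    refine h2.congr_deriv (Eq.symm ?_)
    ring
  rw [intervalIntegral.integral_eq_sub_of_hasDerivAt hderiv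
    ((by continuity : Continuous (fun x : ℝ => Real.sqrt (2/π) * Real.exp (-x^2/2) * x)).intervalIntegrable 0 1)]
  norm_num
  ring

/-! ### The key integral bounds -/

lemma alphaLSH_pos : 0 < alphaLSH := by
  have h1 : 0 < Real.sqrt (2/π) * (1 - Real.exp (-1/2)) := by
    apply mul_pos (Real.sqrt_pos.2 (by positivity))
    have : Real.exp (-1/2 : ℝ) < 1 := Real.exp_lt_one_iff.2 (by norm_num)
    linarith
  have h2 : 0 ≤ ∫ z in Ioi (1:ℝ), Real.sqrt (2/π) * Real.exp (-z^2/2) :=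
    setIntegral_nonneg measurableSet_Ioi (fun z _ => by positivity)
  rw [alphaLSH]
  linarith

lemma key_bounds {a b s : ℝ} (ha : 0 < a) (hb : 0 < b) (hs : 0 < s) :
    IntegrableOn (fun z : ℝ => Real.sqrt (2 / π) * Real.exp (-z ^ 2 / 2) * F a b (s * z))
        (Ioi 0) ∧
    alphaLSH * F a b s
      ≤ (∫ z in Ioi (0:ℝ), Real.sqrt (2 / π) * Real.exp (-z ^ 2 / 2) * F a b (s * z)) ∧
    (∫ z in Ioi (0:ℝ), Real.sqrt (2 / π) * Real.exp (-z ^ 2 / 2) * F a b (s * z)) ≤ F a b s := by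
  have hab : 0 < a * b := mul_pos ha hb
  set G : ℝ → ℝ := fun z => Real.sqrt (2/π) * Real.exp (-z^2/2) with hG
  have hGnn : ∀ z, 0 ≤ G z := fun z => by rw [hG]; positivity
  have hcontF : Continuous (fun z : ℝ => F a b (s * z)) := by
    have : (fun z : ℝ => F a b (s * z))
        = fun z => 2 * Real.arsinh (Real.sqrt (((s*z)^2 + (a-b)^2) / (4*(a*b)))) :=
      funext fun z => F_eq ha hb (s*z)
    rw [this]
    exact continuous_const.mul (Real.continuous_arsinh.comp
      (Real.continuous_sqrt.comp (by fun_prop)))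
  have hcont : Continuous (fun z : ℝ => G z * F a b (s * z)) := by fun_prop
  -- integrability
  set c₀ : ℝ := 2 * Real.sqrt ((a-b)^2 / (4*(a*b))) with hc₀
  set c₁ : ℝ := 2 * Real.sqrt (s^2 / (4*(a*b))) with hc₁
  have hc₀nn : 0 ≤ c₀ := by positivity
  have hc₁nn : 0 ≤ c₁ := by positivity
  have hbound_int : IntegrableOn
      (fun z : ℝ => c₀ * (Real.sqrt (2/π) * Real.exp (-z^2/2))
        + c₁ * Real.sqrt (2/π) * (z * Real.exp (-z^2/2))) (Ioi 0) :=
    (integrable_g.const_mul c₀).add (integrable_zg.const_mul (c₁ * Real.sqrt (2/π)))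
  have hint : IntegrableOn (fun z : ℝ => G z * F a b (s * z)) (Ioi 0) := by
    apply Integrable.mono' hbound_int hcont.aestronglyMeasurable.restrict
    filter_upwards [ae_restrict_mem measurableSet_Ioi] with z hz
    have hz' : (0:ℝ) ≤ z := le_of_lt hz
    have hFnn := F_nonneg ha hb (s * z)
    rw [Real.norm_eq_abs, abs_of_nonneg (mul_nonneg (hGnn z) hFnn)]
    have hlin := F_le_linear ha hb (s := s) hz'
    calc G z * F a b (s * z) ≤ G z * (c₀ + c₁ * z) := by
          apply mul_le_mul_of_nonneg_left _ (hGnn z)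
          rw [hc₀, hc₁]; linarith
      _ = c₀ * (Real.sqrt (2/π) * Real.exp (-z^2/2))
            + c₁ * Real.sqrt (2/π) * (z * Real.exp (-z^2/2)) := by rw [hG]; ring
  refine ⟨hint, ?_, ?_⟩
  · -- lower bound
    have hsub1 : Ioc (0:ℝ) 1 ⊆ Ioi 0 := Ioc_subset_Ioi_self
    have hsub2 : Ioi (1:ℝ) ⊆ Ioi 0 := Ioi_subset_Ioi zero_le_one
    have hsplit : Ioc (0:ℝ) 1 ∪ Ioi 1 = Ioi 0 := Ioc_union_Ioi_eq_Ioi zero_le_one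
    have hdisj : Disjoint (Ioc (0:ℝ) 1) (Ioi 1) := Ioc_disjoint_Ioi le_rfl
    have hi1 := hint.mono_set hsub1
    have hi2 := hint.mono_set hsub2
    rw [show (∫ z in Ioi (0:ℝ), Real.sqrt (2 / π) * Real.exp (-z ^ 2 / 2) * F a b (s * z))
        = ∫ z in Ioi (0:ℝ), G z * F a b (s * z) from rfl]
    rw [← hsplit, setIntegral_union hdisj measurableSet_Ioi hi1 hi2]
    have B1 : Real.sqrt (2/π) * (1 - Real.exp (-1/2)) * F a b s
        ≤ ∫ z in Ioc (0:ℝ) 1, G z * F a b (s * z) := by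
      have hmono : ∫ z in Ioc (0:ℝ) 1, F a b s * (G z * z)
          ≤ ∫ z in Ioc (0:ℝ) 1, G z * F a b (s * z) := by
        apply setIntegral_mono_on _ hi1 measurableSet_Ioc
        · intro z hz
          have h := F_lower ha hb hs.le hz.1.le hz.2
          calc F a b s * (G z * z) = G z * (z * F a b s) := by ring
            _ ≤ G z * F a b (s * z) := mul_le_mul_of_nonneg_left h (hGnn z)
        · apply Integrable.const_mul
          have : IntegrableOn (fun z : ℝ => G z * z) (Ioc (0:ℝ) 1) := by
            apply (Continuous.integrableOn_Ioc (by fun_prop))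
          exact this
      have hval : ∫ z in Ioc (0:ℝ) 1, F a b s * (G z * z)
          = F a b s * (Real.sqrt (2/π) * (1 - Real.exp (-1/2))) := by
        rw [integral_const_mul]
        congr 1
        rw [← int_zg_Ioc]
      rw [hval] at hmono
      linarith
    have B2 : (∫ z in Ioi (1:ℝ), Real.sqrt (2/π) * Real.exp (-z^2/2)) * F a b s
        ≤ ∫ z in Ioi (1:ℝ), G z * F a b (s * z) := by
      have hmono : ∫ z in Ioi (1:ℝ), G z * F a b s ≤ ∫ z in Ioi (1:ℝ), G z * F a b (s * z) := by
        apply setIntegral_mono_on _ hi2 measurableSet_Ioi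
        · intro z hz
          apply mul_le_mul_of_nonneg_left _ (hGnn z)
          apply F_mono ha hb hs.le
          nlinarith [le_of_lt (mem_Ioi.1 hz)]
        · exact (integrable_g.mono_set hsub2).mul_const _
      rw [integral_mul_const] at hmono
      exact hmono
    rw [alphaLSH]
    have hFnn := F_nonneg ha hb s
    nlinarith [B1, B2]
  · -- upper bound
    obtain ⟨C, hC⟩ := F_upper ha hb hs
    have hint2 : IntegrableOn
        (fun z : ℝ => (F a b s - C) * (Real.sqrt (2/π) * Real.exp (-z^2/2))
          + C * (Real.sqrt (2/π) * Real.exp (-z^2/2) * z^2)) (Ioi 0) := by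
      exact (integrable_g.const_mul _).add (integrable_gz2.const_mul _)
    have hmono : ∫ z in Ioi (0:ℝ), G z * F a b (s * z)
        ≤ ∫ z in Ioi (0:ℝ), ((F a b s - C) * (Real.sqrt (2/π) * Real.exp (-z^2/2))
          + C * (Real.sqrt (2/π) * Real.exp (-z^2/2) * z^2)) := by
      apply setIntegral_mono_on hint hint2 measurableSet_Ioi
      intro z hz
      have h := hC z (le_of_lt hz)
      calc G z * F a b (s * z) ≤ G z * (F a b s + C * (z^2 - 1)) :=
            mul_le_mul_of_nonneg_left h (hGnn z)
        _ = (F a b s - C) * (Real.sqrt (2/π) * Real.exp (-z^2/2))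
            + C * (Real.sqrt (2/π) * Real.exp (-z^2/2) * z^2) := by rw [hG]; ring
    have e1 : ∫ z in Ioi (0:ℝ), (F a b s - C) * (Real.sqrt (2/π) * Real.exp (-z^2/2))
        = F a b s - C := by
      rw [integral_const_mul, int_g, mul_one]
    have e2 : ∫ z in Ioi (0:ℝ), C * (Real.sqrt (2/π) * Real.exp (-z^2/2) * z^2) = C := by
      rw [integral_const_mul, int_z2g, mul_one]
    have hval : ∫ z in Ioi (0:ℝ), ((F a b s - C) * (Real.sqrt (2/π) * Real.exp (-z^2/2))
        + C * (Real.sqrt (2/π) * Real.exp (-z^2/2) * z^2)) = F a b s := by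
      rw [integral_add (integrable_g.const_mul _) (integrable_gz2.const_mul _), e1, e2]
      ring
    calc (∫ z in Ioi (0:ℝ), Real.sqrt (2 / π) * Real.exp (-z ^ 2 / 2) * F a b (s * z))
        = ∫ z in Ioi (0:ℝ), G z * F a b (s * z) := rfl
      _ ≤ _ := hmono
      _ = F a b s := hval

end Aux

set_option maxHeartbeats 1000000 in
/-- Quantitative core of Theorem 1.6: with collision probabilities `p₁, p₂` of the
Gaussian-projection-plus-random-geodesic LSH scheme for pairs at hyperbolic
distance `r` and `≥ c·r` respectively, one has `0 < p₂ < p₁ < 1` and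
`log(1/p₁)/log(1/p₂) ≤ 1/(α·c)`. -/
theorem lsh_hyperbolic_high_dim_exponent
    (c : ℝ) (hc : 1 / alphaLSH < c)
    (z₁ z₂ z₁' z₂' s s' w : ℝ)
    (hz₁ : 0 < z₁) (hz₂ : 0 < z₂) (hz₁' : 0 < z₁') (hz₂' : 0 < z₂')
    (hs : 0 < s) (hs' : 0 < s') (hw : 0 < w)
    (hr : 0 < F z₁ z₂ s)
    (hfar : c * F z₁ z₂ s ≤ F z₁' z₂' s')
    (hlt : F z₁' z₂' s' < w) :
    (0 < 1 - (1 / w) * ∫ z in Set.Ioi (0 : ℝ),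
        Real.sqrt (2 / π) * Real.exp (-z ^ 2 / 2) * F z₁' z₂' (s' * z)) ∧
    (1 - (1 / w) * ∫ z in Set.Ioi (0 : ℝ),
        Real.sqrt (2 / π) * Real.exp (-z ^ 2 / 2) * F z₁' z₂' (s' * z)) <
      (1 - (1 / w) * ∫ z in Set.Ioi (0 : ℝ),
        Real.sqrt (2 / π) * Real.exp (-z ^ 2 / 2) * F z₁ z₂ (s * z)) ∧
    (1 - (1 / w) * ∫ z in Set.Ioi (0 : ℝ),
        Real.sqrt (2 / π) * Real.exp (-z ^ 2 / 2) * F z₁ z₂ (s * z)) < 1 ∧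
    Real.log (1 / (1 - (1 / w) * ∫ z in Set.Ioi (0 : ℝ),
        Real.sqrt (2 / π) * Real.exp (-z ^ 2 / 2) * F z₁ z₂ (s * z))) /
      Real.log (1 / (1 - (1 / w) * ∫ z in Set.Ioi (0 : ℝ),
        Real.sqrt (2 / π) * Real.exp (-z ^ 2 / 2) * F z₁' z₂' (s' * z))) ≤
      1 / (alphaLSH * c) := by
  have hα : 0 < alphaLSH := alphaLSH_pos
  have hκ : 1 < alphaLSH * c := by
    rw [div_lt_iff₀ hα] at hc
    nlinarith
  have hcpos : 0 < c := by nlinarith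
  set r := F z₁ z₂ s with hrdef
  set R := F z₁' z₂' s' with hRdef
  obtain ⟨_, h1low, h1up⟩ := key_bounds hz₁ hz₂ hs
  obtain ⟨_, h2low, h2up⟩ := key_bounds hz₁' hz₂' hs'
  set I₁ := ∫ z in Set.Ioi (0 : ℝ),
      Real.sqrt (2 / π) * Real.exp (-z ^ 2 / 2) * F z₁ z₂ (s * z) with hI₁
  set I₂ := ∫ z in Set.Ioi (0 : ℝ),
      Real.sqrt (2 / π) * Real.exp (-z ^ 2 / 2) * F z₁' z₂' (s' * z) with hI₂
  -- basic facts
  have hI₁pos : 0 < I₁ := lt_of_lt_of_le (mul_pos hα hr) h1low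
  have hI₂w : I₂ < w := lt_of_le_of_lt h2up hlt
  have hacr : alphaLSH * c * r ≤ I₂ := by
    calc alphaLSH * c * r = alphaLSH * (c * r) := by ring
      _ ≤ alphaLSH * R := by nlinarith
      _ ≤ I₂ := h2low
  have hacrw : alphaLSH * c * r < w := lt_of_le_of_lt hacr hI₂w
  have hrI₂ : r < I₂ := by nlinarith
  have hrw : r < w := by nlinarith
  have hI₁r : I₁ ≤ r := h1up
  have hI₁w : I₁ < w := lt_of_le_of_lt hI₁r hrw
  have hp₂pos : 0 < 1 - (1/w) * I₂ := by
    rw [sub_pos]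
    rw [div_mul_eq_mul_div, one_mul, div_lt_one hw]
    exact hI₂w
  have hp₁pos : 0 < 1 - (1/w) * I₁ := by
    rw [sub_pos, div_mul_eq_mul_div, one_mul, div_lt_one hw]
    exact hI₁w
  have hlt12 : 1 - (1/w) * I₂ < 1 - (1/w) * I₁ := by
    have : (1/w) * I₁ < (1/w) * I₂ :=
      mul_lt_mul_of_pos_left (lt_of_le_of_lt hI₁r hrI₂) (by positivity)
    linarith
  have hp₁lt1 : 1 - (1/w) * I₁ < 1 := by
    have : 0 < (1/w) * I₁ := mul_pos (by positivity) hI₁pos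
    linarith
  refine ⟨hp₂pos, hlt12, hp₁lt1, ?_⟩
  -- the exponent bound
  set κ := alphaLSH * c with hκdef
  have hκpos : 0 < κ := by nlinarith
  set x := (1/w) * r with hx
  have hxpos : 0 < x := mul_pos (by positivity) hr
  have hx1 : x < 1 := by
    rw [hx, div_mul_eq_mul_div, one_mul, div_lt_one hw]; exact hrw
  have hκx1 : κ * x < 1 := by
    rw [hx, hκdef]
    rw [show alphaLSH * c * ((1/w) * r) = (alphaLSH * c * r) / w by ring]
    rw [div_lt_one hw]
    exact hacrw
  have hκxpos : 0 < κ * x := mul_pos hκpos hxpos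
  -- rewrite logs
  rw [one_div (1 - (1/w) * I₁), one_div (1 - (1/w) * I₂), Real.log_inv, Real.log_inv]
  have hL₁ : -Real.log (1 - (1/w) * I₁) ≤ -Real.log (1 - x) := by
    have h1 : 1 - x ≤ 1 - (1/w) * I₁ := by
      have : (1/w) * I₁ ≤ (1/w) * r := by
        apply mul_le_mul_of_nonneg_left hI₁r (by positivity)
      rw [hx]; linarith
    have := Real.log_le_log (by linarith : (0:ℝ) < 1 - x) h1
    linarith
  have hL₂ : -Real.log (1 - κ * x) ≤ -Real.log (1 - (1/w) * I₂) := by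
    have h1 : 1 - (1/w) * I₂ ≤ 1 - κ * x := by
      have : κ * x ≤ (1/w) * I₂ := by
        rw [hx, hκdef]
        rw [show alphaLSH * c * ((1/w) * r) = (1/w) * (alphaLSH * c * r) by ring]
        apply mul_le_mul_of_nonneg_left hacr (by positivity)
      linarith
    have := Real.log_le_log hp₂pos h1
    linarith
  have hL₂pos : 0 < -Real.log (1 - κ * x) := by
    have := Real.log_neg (by linarith : (0:ℝ) < 1 - κ * x) (by linarith : 1 - κ * x < 1)
    linarith
  have hL₂pos' : 0 < -Real.log (1 - (1/w) * I₂) := lt_of_lt_of_le hL₂pos hL₂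
  -- Bernoulli
  have hber : 1 - κ * x ≤ (1 - x) ^ κ := by
    have := one_add_mul_self_le_rpow_one_add (by linarith : (-1:ℝ) ≤ -x) hκ.le
    rw [show (1:ℝ) + -x = 1 - x by ring] at this
    rw [show (1:ℝ) + κ * -x = 1 - κ * x by ring] at this
    exact this
  have hlogber : Real.log (1 - κ * x) ≤ κ * Real.log (1 - x) := by
    calc Real.log (1 - κ * x) ≤ Real.log ((1 - x) ^ κ) :=
          Real.log_le_log (by linarith) hber
      _ = κ * Real.log (1 - x) := Real.log_rpow (by linarith) κ
  rw [div_le_div_iff₀ hL₂pos' hκpos]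
  have hmul := mul_le_mul_of_nonneg_right hL₁ hκpos.le
  nlinarith [hL₂, hlogber, hmul]
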